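/- Let R_{b1}(z,w) = (w − z²)² / ((w + 3z²)(z − 1)(z − w)). Fix λ ∈ ℂ, λ ≠ 0, and for t ∈ ℂ define z(t) = t((1−λ)t + λ) / (λ(t−1)(4−t)) and w(t) = t²((1−λ)t + λ)(3λ − t) / (λ²(t−1)(4−t)²). Then for every t ∈ ℂ such that (t−1)(4−t) ≠ 0 and (w(t) + 3z(t)²)(z(t) − 1)(z(t) − w(t)) ≠ 0, one has R_{b1}(z(t), w(t)) = λ. (Thus t ↦ (z(t), w(t)) is a rational parametrization of the level curve {R_{b1} = λ}.) -/
import Mathlib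


/-- Type b1 dual billiards: rational parametrization of the level curve `{R_{b1} = λ}`
of `R_{b1}(z,w) = (w − z²)² / ((w + 3z²)(z − 1)(z − w))`. -/
theorem stmt_6 (lam : ℂ) (hlam : lam ≠ 0)
    (z w : ℂ → ℂ)
    (hz : ∀ t : ℂ, z t = t * ((1 - lam) * t + lam) / (lam * (t - 1) * (4 - t)))
    (hw : ∀ t : ℂ, w t = t ^ 2 * ((1 - lam) * t + lam) * (3 * lam - t) /
      (lam ^ 2 * (t - 1) * (4 - t) ^ 2))
    (t : ℂ) (ht : (t - 1) * (4 - t) ≠ 0)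
    (hden : (w t + 3 * z t ^ 2) * (z t - 1) * (z t - w t) ≠ 0) :
    (w t - z t ^ 2) ^ 2 / ((w t + 3 * z t ^ 2) * (z t - 1) * (z t - w t)) = lam := by
  have h1 : t - 1 ≠ 0 := fun h => ht (by rw [h]; ring)
  have h4 : (4 : ℂ) - t ≠ 0 := fun h => ht (by rw [h]; ring)
  rw [div_eq_iff hden, hz, hw] at *
  field_simp at hden ⊢
  ring
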